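/- Multiplicative Weights Update guarantee: Consider a T-round game with m constraints. Importances satisfy imp¹(i) = 1 and imp^{t+1}(i) = imp^t(i)·(1 + η·gap^t(i)) with η = ε/(3W). Suppose for each round t, gap^t(i) ∈ [0,W] for all i and Σ_{i=1}ᵐ imp^t(i)·gap^t(i) ≤ Σ_{i=1}ᵐ imp^t(i). If T ≥ 9·W·ln(m)/ε² and 0 < ε ≤ 1/2, then for every constraint i, (Σ_{t=1}^T gap^t(i))/T ≤ 1 + ε. -/

import Mathlib

/-- Multiplicative Weights Update guarantee. -/
theorem mwu_guarantee (m T : ℕ) (hm : 2 ≤ m) (W ε η : ℝ) (hW : 0 < W)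
    (hε0 : 0 < ε) (hε : ε ≤ 1 / 2) (hη : η = ε / (3 * W))
    (gap : ℕ → Fin m → ℝ) (imp : ℕ → Fin m → ℝ)
    (himp0 : ∀ i, imp 0 i = 1)
    (himprec : ∀ t, t < T → ∀ i, imp (t + 1) i = imp t i * (1 + η * gap t i))
    (hgap : ∀ t, t < T → ∀ i, 0 ≤ gap t i ∧ gap t i ≤ W)
    (horacle : ∀ t, t < T → ∑ i, imp t i * gap t i ≤ ∑ i, imp t i)
    (hT : (T : ℝ) ≥ 9 * W * Real.log m / ε ^ 2) :
    ∀ i : Fin m, (∑ t ∈ Finset.range T, gap t i) / T ≤ 1 + ε := by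
  intro i
  haveI : Nonempty (Fin m) := ⟨⟨0, by omega⟩⟩
  have hη0 : 0 < η := by rw [hη]; positivity
  have hm2 : (2:ℝ) ≤ (m:ℝ) := by exact_mod_cast hm
  have hlogm : 0 < Real.log m := Real.log_pos (by linarith)
  have hT0 : (0:ℝ) < T := by
    have : 0 < 9 * W * Real.log m / ε ^ 2 := by positivity
    linarith
  have h3W : (0:ℝ) < 3 * W := by linarith
  have hε3 : (0:ℝ) < 1 + ε / 3 := by linarith
  -- key analytic inequality
  have key : ∀ z : ℝ, 0 ≤ z → z ≤ ε / 3 → Real.exp (z / (1 + ε / 3)) ≤ 1 + z := by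
    intro z hz0 hz1
    have h1z : (0:ℝ) < 1 + z := by linarith
    have hlog1 := Real.log_le_sub_one_of_pos (x := (1 + z)⁻¹) (by positivity)
    rw [Real.log_inv] at hlog1
    have heq : (1 + z)⁻¹ - 1 = -(z / (1 + z)) := by field_simp; ring
    rw [heq] at hlog1
    have hlb : z / (1 + z) ≤ Real.log (1 + z) := by linarith
    have hmono : z / (1 + ε / 3) ≤ z / (1 + z) := by gcongr
    calc Real.exp (z / (1 + ε / 3)) ≤ Real.exp (Real.log (1 + z)) :=
          Real.exp_le_exp.mpr (le_trans hmono hlb)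
      _ = 1 + z := Real.exp_log h1z
  -- positivity of importances
  have himp_pos : ∀ t, t ≤ T → ∀ j, 0 < imp t j := by
    intro t
    induction t with
    | zero => intro _ j; rw [himp0]; norm_num
    | succ n ih =>
      intro hn j
      rw [himprec n (by omega) j]
      have h1 := (hgap n (by omega) j).1
      have h2 := ih (by omega) j
      have h3 : 0 < 1 + η * gap n j := by nlinarith
      exact mul_pos h2 h3
  -- product formula
  have hprod : ∀ t, t ≤ T → ∀ j, imp t j = ∏ s ∈ Finset.range t, (1 + η * gap s j) := by
    intro t
    induction t with
    | zero => intro _ j; simp [himp0]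
    | succ n ih =>
      intro hn j
      rw [Finset.prod_range_succ, ← ih (by omega), himprec n (by omega)]
  -- potential bound
  have hΦ : ∀ t, t ≤ T → ∑ j, imp t j ≤ (m : ℝ) * (1 + η) ^ t := by
    intro t
    induction t with
    | zero => intro _; simp [himp0]
    | succ n ih =>
      intro hn
      have hn' : n < T := by omega
      have hsum := ih (by omega)
      have hsum_pos : 0 < ∑ j, imp n j := by
        apply Finset.sum_pos (fun j _ => himp_pos n (by omega) j)
        exact Finset.univ_nonempty
      calc ∑ j, imp (n + 1) j
          = ∑ j, (imp n j + η * (imp n j * gap n j)) := by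
            apply Finset.sum_congr rfl
            intro j _
            rw [himprec n hn' j]; ring
        _ = (∑ j, imp n j) + η * ∑ j, imp n j * gap n j := by
            rw [Finset.sum_add_distrib, Finset.mul_sum]
        _ ≤ (∑ j, imp n j) + η * ∑ j, imp n j := by
            have := horacle n hn'
            nlinarith
        _ = (1 + η) * ∑ j, imp n j := by ring
        _ ≤ (1 + η) * ((m : ℝ) * (1 + η) ^ n) := by
            apply mul_le_mul_of_nonneg_left hsum (by linarith)
        _ = (m : ℝ) * (1 + η) ^ (n + 1) := by ring
  set S : ℝ := ∑ t ∈ Finset.range T, gap t i with hS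
  -- lower bound on imp T i
  have hlow : Real.exp (η * S / (1 + ε / 3)) ≤ imp T i := by
    rw [hprod T le_rfl i]
    have hrw : η * S / (1 + ε / 3) = ∑ t ∈ Finset.range T, η * gap t i / (1 + ε / 3) := by
      rw [hS, Finset.mul_sum, Finset.sum_div]
    rw [hrw, Real.exp_sum]
    apply Finset.prod_le_prod
    · intro t _; positivity
    · intro t ht
      rw [Finset.mem_range] at ht
      apply key
      · exact mul_nonneg hη0.le (hgap t ht i).1
      · have h1 : η * gap t i ≤ η * W := mul_le_mul_of_nonneg_left (hgap t ht i).2 hη0.le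
        have h2 : η * W = ε / 3 := by rw [hη]; field_simp
        linarith
  -- upper bound on imp T i
  have hup : imp T i ≤ (m : ℝ) * Real.exp (η * T) := by
    have h1 : imp T i ≤ ∑ j, imp T j :=
      Finset.single_le_sum (fun j _ => (himp_pos T le_rfl j).le) (Finset.mem_univ i)
    have h2 : (1 + η) ^ T ≤ Real.exp (η * T) := by
      rw [show η * (T:ℝ) = (T:ℕ) • η by simp [nsmul_eq_mul]; ring, Real.exp_nsmul]
      apply pow_le_pow_left₀ (by linarith)
      linarith [Real.add_one_le_exp η]
    calc imp T i ≤ ∑ j, imp T j := h1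
      _ ≤ (m : ℝ) * (1 + η) ^ T := hΦ T le_rfl
      _ ≤ (m : ℝ) * Real.exp (η * T) := by
          apply mul_le_mul_of_nonneg_left h2 (by positivity)
  -- combine
  have hcomb : η * S / (1 + ε / 3) ≤ Real.log m + η * T := by
    have h1 : Real.exp (η * S / (1 + ε / 3)) ≤ Real.exp (Real.log m + η * T) := by
      rw [Real.exp_add, Real.exp_log (by linarith : (0:ℝ) < (m:ℝ))]
      linarith
    exact Real.exp_le_exp.mp h1
  have hA : η * S ≤ (Real.log m + η * T) * (1 + ε / 3) := by
    rw [← div_le_iff₀ hε3] at *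
    exact hcomb
  have hA3 : ε * S ≤ (3 * W * Real.log m + ε * T) * (1 + ε / 3) := by
    have hηW : η * (3 * W) = ε := by rw [hη]; field_simp
    have hA2 : ε * S ≤ ((Real.log m + η * T) * (1 + ε / 3)) * (3 * W) := by
      rw [← div_le_iff₀ h3W]
      calc ε * S / (3 * W) = η * S := by rw [hη]; ring
        _ ≤ _ := hA
    calc ε * S ≤ ((Real.log m + η * T) * (1 + ε / 3)) * (3 * W) := hA2
      _ = (3 * W * Real.log m + (η * (3 * W)) * T) * (1 + ε / 3) := by ring
      _ = _ := by rw [hηW]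
  have hB : 9 * W * Real.log m ≤ (T:ℝ) * ε ^ 2 := by
    rw [ge_iff_le, div_le_iff₀ (by positivity : (0:ℝ) < ε ^ 2)] at hT
    linarith
  rw [div_le_iff₀ hT0]
  nlinarith [mul_nonneg (mul_nonneg hε0.le hT0.le) (by linarith : (0:ℝ) ≤ 3 - ε),
    mul_pos hε0 hT0, sq_nonneg ε]
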